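/- Assume the two shifted (isomonodromic) refactorization identities B₂⁽ᵗ⁻¹⁾(z+1)·B₁⁽ᵗ⁻¹⁾(z) = B₁⁽ᵗ⁾(z)·B₂⁽ᵗ⁾(z) and B₂⁽ᵗ⁾(z+1)·B₁⁽ᵗ⁾(z) = B₁⁽ᵗ⁺¹⁾(z)·B₂⁽ᵗ⁺¹⁾(z) hold for all admissible z, and that the scalars q₂⁽ᵗ⁾†·p₁⁽ᵗ⁾, q₂⁽ᵗ⁾†·A⁻¹·p₁⁽ᵗ⁻¹⁾, q₂⁽ᵗ⁾†·A⁻²·p₁⁽ᵗ⁾, q₂⁽ᵗ⁾†·A⁻¹·p₁⁽ᵗ⁺¹⁾, q₂⁽ᵗ⁻¹⁾†·A⁻¹·p₁⁽ᵗ⁾ and q₂⁽ᵗ⁺¹⁾†·A⁻¹·p₁⁽ᵗ⁾ are nonzero. Then the following time-dependent discrete Euler–Lagrange identities hold (they are the Euler–Lagrange equations of the time-dependent Lagrangian L(X,Y,s) obtained from (z₂−z₁)log(x₂†x₁) + (z₁−ζ₂)log(x₂†A⁻¹y₁) + (ζ₂−ζ₁)log(y₂†A⁻²y₁) + (ζ₁−z₂)log(y₂†A⁻¹x₁)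 by replacing z₂, ζ₂ by z₂(s), ζ₂(s)): (z₂(t)−ζ₁)·(q₂⁽ᵗ⁾†·A⁻¹·p₁⁽ᵗ⁻¹⁾)⁻¹ • (A⁻¹·p₁⁽ᵗ⁻¹⁾) + (ζ₁−ζ₂(t))·(q₂⁽ᵗ⁾†·A⁻²·p₁⁽ᵗ⁾)⁻¹ • (A⁻²·p₁⁽ᵗ⁾) = (z₂(t+1)−z₁)·(q₂⁽ᵗ⁾†·p₁⁽ᵗ⁾)⁻¹ • p₁⁽ᵗ⁾ + (z₁−ζ₂(t+1))·(q₂⁽ᵗ⁾†·A⁻¹·p₁⁽ᵗ⁺¹⁾)⁻¹ • (A⁻¹·p₁⁽ᵗ⁺¹⁾) as column vectors, and (z₁−ζ₂(t))·(q₂⁽ᵗ⁻¹⁾†·A⁻¹·p₁⁽ᵗ⁾)⁻¹ • (q₂⁽ᵗ⁻¹⁾†·A⁻¹) + (ζ₂(t)−ζ₁)·(q₂⁽ᵗ⁾†·A⁻²·p₁⁽ᵗ⁾)⁻¹ • (q₂⁽ᵗ⁾†·A⁻²) = (z₁−z₂(t+1))·(q₂⁽ᵗ⁾†·p₁⁽ᵗ⁾)⁻¹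 • q₂⁽ᵗ⁾† + (z₂(t+1)−ζ₁)·(q₂⁽ᵗ⁺¹⁾†·A⁻¹·p₁⁽ᵗ⁾)⁻¹ • (q₂⁽ᵗ⁺¹⁾†·A⁻¹) as row vectors. -/

import Mathlib

open Matrix

lemma isoEL_mul_oneByOne {r : ℕ} (u : Matrix (Fin r) (Fin 1) ℂ) (M : Matrix (Fin 1) (Fin 1) ℂ) :
    u * M = (M 0 0) • u := by
  ext i j; fin_cases j; simp [Matrix.mul_apply, Fin.sum_univ_one, mul_comm]; ring

lemma isoEL_oneByOne_mul {r : ℕ} (M : Matrix (Fin 1) (Fin 1) ℂ) (v : Matrix (Fin 1) (Fin r) ℂ) :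
    M * v = (M 0 0) • v := by
  ext i j; fin_cases i; simp [Matrix.mul_apply, Fin.sum_univ_one]

lemma isoEL_trace_entry {r : ℕ} (p : Matrix (Fin r) (Fin 1) ℂ) (q : Matrix (Fin 1) (Fin r) ℂ)
    (M : Matrix (Fin r) (Fin r) ℂ) : (p * q * M).trace = (q * M * p) 0 0 := by
  rw [Matrix.mul_assoc, Matrix.trace_mul_comm, Matrix.trace_fin_one]

lemma isoEL_exists_col_ne {r : ℕ} (p : Matrix (Fin r) (Fin 1) ℂ) (hp : p ≠ 0) :
    ∃ i, p i 0 ≠ 0 := by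
  by_contra hcon
  push_neg at hcon
  exact hp (by ext i j; fin_cases j; simp [hcon])

lemma isoEL_exists_row_ne {r : ℕ} (q : Matrix (Fin 1) (Fin r) ℂ) (hq : q ≠ 0) :
    ∃ j, q 0 j ≠ 0 := by
  by_contra hcon
  push_neg at hcon
  exact hq (by ext i j; fin_cases i; simp [hcon])

lemma isoEL_rank_one_split {r : ℕ} (p X : Matrix (Fin r) (Fin 1) ℂ)
    (q Y : Matrix (Fin 1) (Fin r) ℂ)
    (hp : p ≠ 0) (hq : q ≠ 0) (h : X * q = p * Y) :
    ∃ a : ℂ, X = a • p ∧ Y = a • q := by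
  obtain ⟨i₀, hi⟩ := isoEL_exists_col_ne p hp
  obtain ⟨j₀, hj⟩ := isoEL_exists_row_ne q hq
  have key : ∀ i j, X i 0 * q 0 j = p i 0 * Y 0 j := by
    intro i j
    have := congrFun (congrFun h i) j
    simpa [Matrix.mul_apply, Fin.sum_univ_one] using this
  refine ⟨Y 0 j₀ / q 0 j₀, ?_, ?_⟩
  · ext i k
    fin_cases k
    simp only [Fin.zero_eta]
    have h1 := key i j₀
    simp only [Matrix.smul_apply, smul_eq_mul]
    field_simp
    linear_combination h1
  · ext k j
    fin_cases k
    simp only [Fin.zero_eta]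
    have h1 := key i₀ j
    have h2 := key i₀ j₀
    simp only [Matrix.smul_apply, smul_eq_mul]
    field_simp
    apply mul_left_cancel₀ hi
    linear_combination q 0 j * h2 - q 0 j₀ * h1

lemma isoEL_res {r : ℕ} (A G₁ G₂ G₁' G₂' : Matrix (Fin r) (Fin r) ℂ) (z₁ β : ℂ)
    (h : ∀ z : ℂ, z ≠ z₁ → z ≠ β →
      (A + (z - β)⁻¹ • G₂') * (A + (z - z₁)⁻¹ • G₁') =
      (A + (z - z₁)⁻¹ • G₁) * (A + (z - β)⁻¹ • G₂)) :
    (z₁ - β) • (A * G₁' - G₁ * A) + (G₂' * G₁' - G₁ * G₂) = 0 ∧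
    (β - z₁) • (G₂' * A - A * G₂) + (G₂' * G₁' - G₁ * G₂) = 0 := by
  have Q : ∀ z : ℂ, z ≠ z₁ → z ≠ β →
      (z - z₁) • (G₂' * A - A * G₂) + (z - β) • (A * G₁' - G₁ * A)
        + (G₂' * G₁' - G₁ * G₂) = 0 := by
    intro z h1 h2
    have h1' : z - z₁ ≠ 0 := sub_ne_zero.2 h1
    have h2' : z - β ≠ 0 := sub_ne_zero.2 h2
    have key : (z - z₁) • (G₂' * A - A * G₂) + (z - β) • (A * G₁' - G₁ * A)
        + (G₂' * G₁' - G₁ * G₂)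
        = ((z - z₁) * (z - β)) •
          ((A + (z - β)⁻¹ • G₂') * (A + (z - z₁)⁻¹ • G₁')
            - (A + (z - z₁)⁻¹ • G₁) * (A + (z - β)⁻¹ • G₂)) := by
      simp only [add_mul, mul_add, smul_mul_assoc, mul_smul_comm, smul_add, smul_sub,
        smul_smul]
      match_scalars <;> field_simp <;> ring
    rw [key, h z h1 h2, sub_self, smul_zero]
  obtain ⟨a, b, ha1, ha2, hb1, hb2, hab⟩ :
      ∃ a b : ℂ, a ≠ z₁ ∧ a ≠ β ∧ b ≠ z₁ ∧ b ≠ β ∧ a ≠ b := by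
    by_cases hβ1 : β = z₁ + 1
    · refine ⟨z₁ + 2, z₁ + 3, ?_, ?_, ?_, ?_, ?_⟩ <;>
        (subst hβ1; intro hcon; apply_fun (· - z₁) at hcon; norm_num at hcon)
    · by_cases hβ2 : β = z₁ + 2
      · refine ⟨z₁ + 1, z₁ + 3, ?_, ?_, ?_, ?_, ?_⟩ <;>
          (subst hβ2; intro hcon; apply_fun (· - z₁) at hcon; norm_num at hcon)
      · refine ⟨z₁ + 1, z₁ + 2, ?_, fun hcon => hβ1 hcon.symm, ?_,
          fun hcon => hβ2 hcon.symm, ?_⟩ <;>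
          (intro hcon; apply_fun (· - z₁) at hcon; norm_num at hcon)
  have Qa := Q a ha1 ha2
  have Qb := Q b hb1 hb2
  have hUV : (G₂' * A - A * G₂) + (A * G₁' - G₁ * A) = 0 := by
    have h5 : (a - b) • ((G₂' * A - A * G₂) + (A * G₁' - G₁ * A)) = 0 := by
      linear_combination (norm := module) Qa - Qb
    exact (smul_eq_zero.1 h5).resolve_left (sub_ne_zero.2 hab)
  constructor
  · linear_combination (norm := module) Qa - (a - z₁) • hUV
  · linear_combination (norm := module) Qa - (a - β) • hUV

set_option maxHeartbeats 1600000 in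
/-- Time-dependent discrete Euler–Lagrange identities for the isomonodromic
refactorization `B₂⁽ˢ⁾(z+1)B₁⁽ˢ⁾(z) = B₁⁽ˢ⁺¹⁾(z)B₂⁽ˢ⁺¹⁾(z)`, where
`z₂(s) = z₂ − s`, `ζ₂(s) = ζ₂ − s`.  The data at times `s = t−1, t, t+1` are
denoted by suffixes `m`, none, `p` respectively. -/
theorem isomonodromic_euler_lagrange
    (r : ℕ) (hr : 1 ≤ r)
    (A : Matrix (Fin r) (Fin r) ℂ) (hA : IsUnit A.det)
    (z₁ z₂ ζ₁ ζ₂ : ℂ) (t : ℤ)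
    (hd : ∀ s : ℤ, z₁ ≠ z₂ - (s : ℂ) ∧ z₁ ≠ ζ₂ - (s : ℂ) ∧
      ζ₁ ≠ z₂ - (s : ℂ) ∧ ζ₁ ≠ ζ₂ - (s : ℂ))
    (hd' : z₁ ≠ ζ₁) (hd'' : z₂ ≠ ζ₂)
    (p₁m p₂m p₁ p₂ p₁p p₂p : Matrix (Fin r) (Fin 1) ℂ)
    (q₁m q₂m q₁ q₂ q₁p q₂p : Matrix (Fin 1) (Fin r) ℂ)
    (hp₁m : p₁m ≠ 0) (hp₂m : p₂m ≠ 0) (hp₁ : p₁ ≠ 0) (hp₂ : p₂ ≠ 0)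
    (hp₁p : p₁p ≠ 0) (hp₂p : p₂p ≠ 0)
    (hq₁m : q₁m ≠ 0) (hq₂m : q₂m ≠ 0) (hq₁ : q₁ ≠ 0) (hq₂ : q₂ ≠ 0)
    (hq₁p : q₁p ≠ 0) (hq₂p : q₂p ≠ 0)
    (hζ₁m : (p₁m * q₁m * A⁻¹).trace = z₁ - ζ₁)
    (hζ₁t : (p₁ * q₁ * A⁻¹).trace = z₁ - ζ₁)
    (hζ₁p : (p₁p * q₁p * A⁻¹).trace = z₁ - ζ₁)
    (hζ₂m : (p₂m * q₂m * A⁻¹).trace = z₂ - ζ₂)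
    (hζ₂t : (p₂ * q₂ * A⁻¹).trace = z₂ - ζ₂)
    (hζ₂p : (p₂p * q₂p * A⁻¹).trace = z₂ - ζ₂)
    (hre₁ : ∀ z : ℂ, z ≠ z₁ → z ≠ z₂ - (t : ℂ) →
      (A + (z + 1 - (z₂ - ((t : ℂ) - 1)))⁻¹ • (p₂m * q₂m)) * (A + (z - z₁)⁻¹ • (p₁m * q₁m)) =
      (A + (z - z₁)⁻¹ • (p₁ * q₁)) * (A + (z - (z₂ - (t : ℂ)))⁻¹ • (p₂ * q₂)))
    (hre₂ : ∀ z : ℂ, z ≠ z₁ → z ≠ z₂ - ((t : ℂ) + 1) →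
      (A + (z + 1 - (z₂ - (t : ℂ)))⁻¹ • (p₂ * q₂)) * (A + (z - z₁)⁻¹ • (p₁ * q₁)) =
      (A + (z - z₁)⁻¹ • (p₁p * q₁p)) * (A + (z - (z₂ - ((t : ℂ) + 1)))⁻¹ • (p₂p * q₂p)))
    (hs₁ : (q₂ * p₁) 0 0 ≠ 0)
    (hs₂ : (q₂ * A⁻¹ * p₁m) 0 0 ≠ 0)
    (hs₃ : (q₂ * (A ^ 2)⁻¹ * p₁) 0 0 ≠ 0)
    (hs₄ : (q₂ * A⁻¹ * p₁p) 0 0 ≠ 0)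
    (hs₅ : (q₂m * A⁻¹ * p₁) 0 0 ≠ 0)
    (hs₆ : (q₂p * A⁻¹ * p₁) 0 0 ≠ 0) :
    ((((z₂ - (t : ℂ)) - ζ₁) * ((q₂ * A⁻¹ * p₁m) 0 0)⁻¹) • (A⁻¹ * p₁m)
        + ((ζ₁ - (ζ₂ - (t : ℂ))) * ((q₂ * (A ^ 2)⁻¹ * p₁) 0 0)⁻¹) • ((A ^ 2)⁻¹ * p₁)
      = (((z₂ - ((t : ℂ) + 1)) - z₁) * ((q₂ * p₁) 0 0)⁻¹) • p₁
        + ((z₁ - (ζ₂ - ((t : ℂ) + 1))) * ((q₂ * A⁻¹ * p₁p) 0 0)⁻¹) • (A⁻¹ * p₁p)) ∧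
    (((z₁ - (ζ₂ - (t : ℂ))) * ((q₂m * A⁻¹ * p₁) 0 0)⁻¹) • (q₂m * A⁻¹)
        + (((ζ₂ - (t : ℂ)) - ζ₁) * ((q₂ * (A ^ 2)⁻¹ * p₁) 0 0)⁻¹) • (q₂ * (A ^ 2)⁻¹)
      = ((z₁ - (z₂ - ((t : ℂ) + 1))) * ((q₂ * p₁) 0 0)⁻¹) • q₂
        + (((z₂ - ((t : ℂ) + 1)) - ζ₁) * ((q₂p * A⁻¹ * p₁) 0 0)⁻¹) • (q₂p * A⁻¹)) := by
  -- normalize powers and associativity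
  have hA2 : (A ^ 2)⁻¹ = A⁻¹ * A⁻¹ := by rw [pow_two, Matrix.mul_inv_rev]
  rw [hA2] at hs₃ ⊢
  simp only [Matrix.mul_assoc] at hs₂ hs₃ hs₄ hs₅ hs₆ ⊢
  -- cancellation helpers
  have hAiA : ∀ (v : Matrix (Fin r) (Fin 1) ℂ), A⁻¹ * (A * v) = v := fun v => by
    rw [← Matrix.mul_assoc, Matrix.nonsing_inv_mul A hA, Matrix.one_mul]
  have hAAi : ∀ (v : Matrix (Fin r) (Fin 1) ℂ), A * (A⁻¹ * v) = v := fun v => by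
    rw [← Matrix.mul_assoc, Matrix.mul_nonsing_inv A hA, Matrix.one_mul]
  have hAAis : ∀ (B : Matrix (Fin r) (Fin r) ℂ), A * (A⁻¹ * B) = B := fun B => by
    rw [← Matrix.mul_assoc, Matrix.mul_nonsing_inv A hA, Matrix.one_mul]
  have hAAi1 : A * A⁻¹ = 1 := Matrix.mul_nonsing_inv A hA
  -- trace scalars
  have tr1 : (q₁ * (A⁻¹ * p₁)) 0 0 = z₁ - ζ₁ := by
    rw [← Matrix.mul_assoc, ← isoEL_trace_entry, hζ₁t]
  have tr2 : (q₂ * (A⁻¹ * p₂)) 0 0 = z₂ - ζ₂ := by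
    rw [← Matrix.mul_assoc, ← isoEL_trace_entry, hζ₂t]
  have tr3 : (q₂m * (A⁻¹ * p₂m)) 0 0 = z₂ - ζ₂ := by
    rw [← Matrix.mul_assoc, ← isoEL_trace_entry, hζ₂m]
  have tr4 : (q₁m * (A⁻¹ * p₁m)) 0 0 = z₁ - ζ₁ := by
    rw [← Matrix.mul_assoc, ← isoEL_trace_entry, hζ₁m]
  -- residue identities from the two refactorizations
  have res₁ := isoEL_res A (p₁ * q₁) (p₂ * q₂) (p₁m * q₁m) (p₂m * q₂m) z₁ (z₂ - (t : ℂ))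
    (by
      intro z hz1 hz2
      have h0 := hre₁ z hz1 hz2
      rwa [show z + 1 - (z₂ - ((t : ℂ) - 1)) = z - (z₂ - (t : ℂ)) by ring] at h0)
  have res₂ := isoEL_res A (p₁p * q₁p) (p₂p * q₂p) (p₁ * q₁) (p₂ * q₂) z₁ (z₂ - ((t : ℂ) + 1))
    (by
      intro z hz1 hz2
      have h0 := hre₂ z hz1 hz2
      rwa [show z + 1 - (z₂ - (t : ℂ)) = z - (z₂ - ((t : ℂ) + 1)) by ring] at h0)
  -- 1×1 collapses
  have hc1 : q₂m * (p₁m * q₁m) = ((q₂m * p₁m) 0 0) • q₁m := by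
    rw [← Matrix.mul_assoc, isoEL_oneByOne_mul]
  have hc2 : q₁ * (p₂ * q₂) = ((q₁ * p₂) 0 0) • q₂ := by
    rw [← Matrix.mul_assoc, isoEL_oneByOne_mul]
  have hc3 : q₂ * (p₁ * q₁) = ((q₂ * p₁) 0 0) • q₁ := by
    rw [← Matrix.mul_assoc, isoEL_oneByOne_mul]
  have hc4 : q₁p * (p₂p * q₂p) = ((q₁p * p₂p) 0 0) • q₂p := by
    rw [← Matrix.mul_assoc, isoEL_oneByOne_mul]
  -- rank-one refactorization relations
  have V1eq : ((z₁ - (z₂ - (t : ℂ))) • (A * p₁m) + ((q₂m * p₁m) 0 0) • p₂m) * q₁m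
      = p₁ * ((z₁ - (z₂ - (t : ℂ))) • (q₁ * A) + ((q₁ * p₂) 0 0) • q₂) := by
    have D := res₁.1
    simp only [Matrix.mul_assoc] at D
    rw [hc1, hc2] at D
    simp only [Matrix.mul_smul] at D
    simp only [Matrix.add_mul, Matrix.mul_add, Matrix.smul_mul, Matrix.mul_smul,
      Matrix.mul_assoc]
    linear_combination (norm := module) D
  obtain ⟨a, hV1c, hV1r⟩ := isoEL_rank_one_split p₁ _ q₁m _ hp₁ hq₁m V1eq
  have V2eq : (((z₂ - (t : ℂ)) - z₁) • (A * p₂) + ((q₁ * p₂) 0 0) • p₁) * q₂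
      = p₂m * (((z₂ - (t : ℂ)) - z₁) • (q₂m * A) + ((q₂m * p₁m) 0 0) • q₁m) := by
    have D := res₁.2
    simp only [Matrix.mul_assoc] at D
    rw [hc1, hc2] at D
    simp only [Matrix.mul_smul] at D
    simp only [Matrix.add_mul, Matrix.mul_add, Matrix.smul_mul, Matrix.mul_smul,
      Matrix.mul_assoc]
    linear_combination (norm := module) -D
  obtain ⟨e, hV2c, hV2r⟩ := isoEL_rank_one_split p₂m _ q₂ _ hp₂m hq₂ V2eq
  have V3eq : ((z₁ - (z₂ - ((t : ℂ) + 1))) • (A * p₁) + ((q₂ * p₁) 0 0) • p₂) * q₁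
      = p₁p * ((z₁ - (z₂ - ((t : ℂ) + 1))) • (q₁p * A) + ((q₁p * p₂p) 0 0) • q₂p) := by
    have D := res₂.1
    simp only [Matrix.mul_assoc] at D
    rw [hc3, hc4] at D
    simp only [Matrix.mul_smul] at D
    simp only [Matrix.add_mul, Matrix.mul_add, Matrix.smul_mul, Matrix.mul_smul,
      Matrix.mul_assoc]
    linear_combination (norm := module) D
  obtain ⟨γ, hV3c, hV3r⟩ := isoEL_rank_one_split p₁p _ q₁ _ hp₁p hq₁ V3eq
  have V4eq : (((z₂ - ((t : ℂ) + 1)) - z₁) • (A * p₂p) + ((q₁p * p₂p) 0 0) • p₁p) * q₂p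
      = p₂ * (((z₂ - ((t : ℂ) + 1)) - z₁) • (q₂ * A) + ((q₂ * p₁) 0 0) • q₁) := by
    have D := res₂.2
    simp only [Matrix.mul_assoc] at D
    rw [hc3, hc4] at D
    simp only [Matrix.mul_smul] at D
    simp only [Matrix.add_mul, Matrix.mul_add, Matrix.smul_mul, Matrix.mul_smul,
      Matrix.mul_assoc]
    linear_combination (norm := module) -D
  obtain ⟨δ, hV4c, hV4r⟩ := isoEL_rank_one_split p₂ _ q₂p _ hp₂ hq₂p V4eq
  -- scalar relations
  have S1 : (z₁ - (z₂ - (t : ℂ))) * (q₂m * p₁m) 0 0 + (q₂m * p₁m) 0 0 * (z₂ - ζ₂)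
      = a * (q₂m * (A⁻¹ * p₁)) 0 0 := by
    have h := congrArg (fun X => (q₂m * (A⁻¹ * X)) 0 0) hV1c
    simpa only [Matrix.mul_add, Matrix.mul_smul, hAiA, Matrix.add_apply, Matrix.smul_apply,
      smul_eq_mul, tr3] using h
  have S2 : (z₂ - (t : ℂ) - z₁) * (q₂m * p₁m) 0 0 + (q₂m * p₁m) 0 0 * (z₁ - ζ₁)
      = e * (q₂ * (A⁻¹ * p₁m)) 0 0 := by
    have h := congrArg (fun Y => (Y * (A⁻¹ * p₁m)) 0 0) hV2r
    simpa only [Matrix.add_mul, Matrix.smul_mul, Matrix.mul_assoc, hAAi, Matrix.add_apply,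
      Matrix.smul_apply, smul_eq_mul, tr4] using h
  have S4 : (z₁ - (z₂ - (t : ℂ))) * (q₂ * (A⁻¹ * p₁m)) 0 0
        + (q₂m * p₁m) 0 0 * (q₂ * (A⁻¹ * (A⁻¹ * p₂m))) 0 0
      = a * (q₂ * (A⁻¹ * (A⁻¹ * p₁))) 0 0 := by
    have h := congrArg (fun X => (q₂ * (A⁻¹ * (A⁻¹ * X))) 0 0) hV1c
    simpa only [Matrix.mul_add, Matrix.mul_smul, hAiA, Matrix.add_apply, Matrix.smul_apply,
      smul_eq_mul] using h
  have S5 : (z₂ - (t : ℂ) - z₁) * (z₂ - ζ₂)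
        + (q₁ * p₂) 0 0 * (q₂ * (A⁻¹ * (A⁻¹ * p₁))) 0 0
      = e * (q₂ * (A⁻¹ * (A⁻¹ * p₂m))) 0 0 := by
    have h := congrArg (fun X => (q₂ * (A⁻¹ * (A⁻¹ * X))) 0 0) hV2c
    simpa only [Matrix.mul_add, Matrix.mul_smul, hAiA, Matrix.add_apply, Matrix.smul_apply,
      smul_eq_mul, tr2] using h
  have SG : (z₁ - (z₂ - ((t : ℂ) + 1))) * (q₂ * p₁) 0 0 + (q₂ * p₁) 0 0 * (z₂ - ζ₂)
      = γ * (q₂ * (A⁻¹ * p₁p)) 0 0 := by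
    have h := congrArg (fun X => (q₂ * (A⁻¹ * X)) 0 0) hV3c
    simpa only [Matrix.mul_add, Matrix.mul_smul, hAiA, Matrix.add_apply, Matrix.smul_apply,
      smul_eq_mul, tr2] using h
  have SD : (z₂ - ((t : ℂ) + 1) - z₁) * (q₂ * p₁) 0 0 + (q₂ * p₁) 0 0 * (z₁ - ζ₁)
      = δ * (q₂p * (A⁻¹ * p₁)) 0 0 := by
    have h := congrArg (fun Y => (Y * (A⁻¹ * p₁)) 0 0) hV4r
    simpa only [Matrix.add_mul, Matrix.smul_mul, Matrix.mul_assoc, hAAi, Matrix.add_apply,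
      Matrix.smul_apply, smul_eq_mul, tr1] using h
  -- nonvanishing scalars
  have hlam : z₁ - (z₂ - (t : ℂ)) ≠ 0 := sub_ne_zero.2 (hd t).1
  have hlam2 : z₂ - (t : ℂ) - z₁ ≠ 0 := sub_ne_zero.2 (Ne.symm (hd t).1)
  have hg : z₁ - (ζ₂ - (t : ℂ)) ≠ 0 := sub_ne_zero.2 (hd t).2.1
  have hw : z₂ - (t : ℂ) - ζ₁ ≠ 0 := sub_ne_zero.2 (Ne.symm (hd t).2.2.1)
  have hdm := hd (t + 1)
  push_cast at hdm
  have hm : z₁ - (ζ₂ - ((t : ℂ) + 1)) ≠ 0 := sub_ne_zero.2 hdm.2.1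
  have hh : z₂ - ((t : ℂ) + 1) - ζ₁ ≠ 0 := sub_ne_zero.2 (Ne.symm hdm.2.2.1)
  have hcne : (q₂m * p₁m) 0 0 ≠ 0 := by
    intro h0
    have ha0 : a = 0 := by
      rw [h0, zero_mul, mul_zero, add_zero] at S1
      rcases mul_eq_zero.1 S1.symm with h | h
      · exact h
      · exact absurd h hs₅
    have hV1c' := hV1c
    rw [h0, ha0, zero_smul, zero_smul, add_zero] at hV1c'
    have hz : A * p₁m = 0 := by
      rcases smul_eq_zero.1 hV1c' with h | h
      · exact absurd h hlam
      · exact h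
    exact hp₁m (by rw [← hAiA p₁m, hz, Matrix.mul_zero])
  have hane : a ≠ 0 := by
    intro h0
    rw [h0, zero_mul] at S1
    have h1 : (q₂m * p₁m) 0 0 * (z₁ - (ζ₂ - (t : ℂ))) = 0 := by linear_combination S1
    rcases mul_eq_zero.1 h1 with h | h
    · exact hcne h
    · exact hg h
  have hene : e ≠ 0 := by
    intro h0
    rw [h0, zero_mul] at S2
    have h1 : (q₂m * p₁m) 0 0 * (z₂ - (t : ℂ) - ζ₁) = 0 := by linear_combination S2
    rcases mul_eq_zero.1 h1 with h | h
    · exact hcne h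
    · exact hw h
  have hγne : γ ≠ 0 := by
    intro h0
    rw [h0, zero_mul] at SG
    have h1 : (q₂ * p₁) 0 0 * (z₁ - (ζ₂ - ((t : ℂ) + 1))) = 0 := by linear_combination SG
    rcases mul_eq_zero.1 h1 with h | h
    · exact hs₁ h
    · exact hm h
  have hδne : δ ≠ 0 := by
    intro h0
    rw [h0, zero_mul] at SD
    have h1 : (q₂ * p₁) 0 0 * (z₂ - ((t : ℂ) + 1) - ζ₁) = 0 := by linear_combination SD
    rcases mul_eq_zero.1 h1 with h | h
    · exact hs₁ h
    · exact hh h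
  -- combined scalar relation
  have S6 : (a * e - (q₂m * p₁m) 0 0 * (q₁ * p₂) 0 0) * (q₂ * (A⁻¹ * (A⁻¹ * p₁))) 0 0
      = (z₁ - (z₂ - (t : ℂ))) * (q₂m * p₁m) 0 0 * ((ζ₂ - (t : ℂ)) - ζ₁) := by
    linear_combination (-e) * S4 + (-((q₂m * p₁m) 0 0)) * S5 + (-(z₁ - (z₂ - (t : ℂ)))) * S2
  -- vector relations with inverses
  have hR1 : (z₁ - (z₂ - (t : ℂ))) • (A⁻¹ * p₁m)
        + ((q₂m * p₁m) 0 0) • (A⁻¹ * (A⁻¹ * p₂m)) = a • (A⁻¹ * (A⁻¹ * p₁)) := by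
    have h := congrArg (fun X => A⁻¹ * (A⁻¹ * X)) hV1c
    simpa only [Matrix.mul_add, Matrix.mul_smul, hAiA] using h
  have hR2 : (z₂ - (t : ℂ) - z₁) • (A⁻¹ * p₂)
        + ((q₁ * p₂) 0 0) • (A⁻¹ * (A⁻¹ * p₁)) = e • (A⁻¹ * (A⁻¹ * p₂m)) := by
    have h := congrArg (fun X => A⁻¹ * (A⁻¹ * X)) hV2c
    simpa only [Matrix.mul_add, Matrix.mul_smul, hAiA] using h
  have hR3 : (z₁ - (z₂ - ((t : ℂ) + 1))) • p₁
        + ((q₂ * p₁) 0 0) • (A⁻¹ * p₂) = γ • (A⁻¹ * p₁p) := by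
    have h := congrArg (fun X => A⁻¹ * X) hV3c
    simpa only [Matrix.mul_add, Matrix.mul_smul, hAiA] using h
  have hR1r : (z₁ - (z₂ - (t : ℂ))) • (q₁ * A⁻¹)
        + ((q₁ * p₂) 0 0) • (q₂ * (A⁻¹ * A⁻¹)) = a • (q₁m * (A⁻¹ * A⁻¹)) := by
    have h := congrArg (fun Y => Y * (A⁻¹ * A⁻¹)) hV1r
    simpa only [Matrix.add_mul, Matrix.smul_mul, Matrix.mul_assoc, hAAis] using h
  have hR2r : (z₂ - (t : ℂ) - z₁) • (q₂m * A⁻¹)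
        + ((q₂m * p₁m) 0 0) • (q₁m * (A⁻¹ * A⁻¹)) = e • (q₂ * (A⁻¹ * A⁻¹)) := by
    have h := congrArg (fun Y => Y * (A⁻¹ * A⁻¹)) hV2r
    simpa only [Matrix.add_mul, Matrix.smul_mul, Matrix.mul_assoc, hAAis] using h
  have hR4r : (z₂ - ((t : ℂ) + 1) - z₁) • q₂
        + ((q₂ * p₁) 0 0) • (q₁ * A⁻¹) = δ • (q₂p * A⁻¹) := by
    have h := congrArg (fun Y => Y * A⁻¹) hV4r
    simpa only [Matrix.add_mul, Matrix.smul_mul, Matrix.mul_assoc, hAAi1,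
      Matrix.mul_one] using h
  -- solved forms
  have hP2m : A⁻¹ * (A⁻¹ * p₂m)
      = e⁻¹ • ((z₂ - (t : ℂ) - z₁) • (A⁻¹ * p₂)
        + ((q₁ * p₂) 0 0) • (A⁻¹ * (A⁻¹ * p₁))) := by
    rw [eq_comm, inv_smul_eq_iff₀ hene]; exact hR2
  have hApm : A⁻¹ * p₁m
      = (z₁ - (z₂ - (t : ℂ)))⁻¹ • (a • (A⁻¹ * (A⁻¹ * p₁))
        - ((q₂m * p₁m) 0 0) • (e⁻¹ • ((z₂ - (t : ℂ) - z₁) • (A⁻¹ * p₂)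
          + ((q₁ * p₂) 0 0) • (A⁻¹ * (A⁻¹ * p₁))))) := by
    rw [eq_comm, inv_smul_eq_iff₀ hlam, ← hP2m]
    linear_combination (norm := module) -hR1
  have hApp : A⁻¹ * p₁p
      = γ⁻¹ • ((z₁ - (z₂ - ((t : ℂ) + 1))) • p₁ + ((q₂ * p₁) 0 0) • (A⁻¹ * p₂)) := by
    rw [eq_comm, inv_smul_eq_iff₀ hγne]; exact hR3
  have hQ1m : q₁m * (A⁻¹ * A⁻¹)
      = a⁻¹ • ((z₁ - (z₂ - (t : ℂ))) • (q₁ * A⁻¹)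
        + ((q₁ * p₂) 0 0) • (q₂ * (A⁻¹ * A⁻¹))) := by
    rw [eq_comm, inv_smul_eq_iff₀ hane]; exact hR1r
  have hQ2m : q₂m * A⁻¹
      = (z₂ - (t : ℂ) - z₁)⁻¹ • (e • (q₂ * (A⁻¹ * A⁻¹))
        - ((q₂m * p₁m) 0 0) • (a⁻¹ • ((z₁ - (z₂ - (t : ℂ))) • (q₁ * A⁻¹)
          + ((q₁ * p₂) 0 0) • (q₂ * (A⁻¹ * A⁻¹))))) := by
    rw [eq_comm, inv_smul_eq_iff₀ hlam2, ← hQ1m]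
    linear_combination (norm := module) -hR2r
  have hQ2p : q₂p * A⁻¹
      = δ⁻¹ • ((z₂ - ((t : ℂ) + 1) - z₁) • q₂ + ((q₂ * p₁) 0 0) • (q₁ * A⁻¹)) := by
    rw [eq_comm, inv_smul_eq_iff₀ hδne]; exact hR4r
  constructor
  · set s1 := (q₂ * p₁) 0 0 with hs1d
    set s2 := (q₂ * (A⁻¹ * p₁m)) 0 0 with hs2d
    set s3 := (q₂ * (A⁻¹ * (A⁻¹ * p₁))) 0 0 with hs3d
    set s4 := (q₂ * (A⁻¹ * p₁p)) 0 0 with hs4d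
    rw [hApm, hApp]
    match_scalars
    · field_simp [hs₁, hs₂, hs₃, hs₄, hane, hene, hγne, hlam, hlam2]
      linear_combination (z₂ - (t:ℂ) - ζ₁) * S6 - (ζ₁ - (ζ₂ - (t:ℂ))) * (z₁ - (z₂ - (t:ℂ))) * S2
    · field_simp [hs₁, hs₂, hs₃, hs₄, hane, hene, hγne, hlam, hlam2]
      linear_combination ((z₂ - (t:ℂ) - ζ₁) * ((q₂m * p₁m) 0 0) * (z₂ - (t:ℂ) - z₁)) * SG + ((z₁ - (ζ₂ - ((t:ℂ) + 1))) * s1 * (z₁ - (z₂ - (t:ℂ)))) * S2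
    · field_simp [hs₁, hs₂, hs₃, hs₄, hane, hene, hγne, hlam, hlam2]
      linear_combination (-(z₁ - (z₂ - ((t:ℂ) + 1)))) * SG
  · set s1 := (q₂ * p₁) 0 0 with hs1d
    set s3 := (q₂ * (A⁻¹ * (A⁻¹ * p₁))) 0 0 with hs3d
    set s5 := (q₂m * (A⁻¹ * p₁)) 0 0 with hs5d
    set s6 := (q₂p * (A⁻¹ * p₁)) 0 0 with hs6d
    rw [hQ2m, hQ2p]
    match_scalars
    · field_simp [hs₁, hs₃, hs₅, hs₆, hane, hene, hδne, hlam, hlam2]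
      linear_combination (z₁ - (ζ₂ - (t:ℂ))) * S6 - ((ζ₂ - (t:ℂ) - ζ₁) * (z₂ - (t:ℂ) - z₁)) * S1
    · field_simp [hs₁, hs₃, hs₅, hs₆, hane, hene, hδne, hlam, hlam2]
      linear_combination ((z₁ - (ζ₂ - (t:ℂ))) * ((q₂m * p₁m) 0 0) * (z₁ - (z₂ - (t:ℂ)))) * SD + ((z₂ - ((t:ℂ) + 1) - ζ₁) * s1 * (z₂ - (t:ℂ) - z₁)) * S1
    · field_simp [hs₁, hs₃, hs₅, hs₆, hane, hene, hδne, hlam, hlam2]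
      linear_combination (z₁ - (z₂ - ((t:ℂ) + 1))) * SD
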